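/- arXiv:1609.08612 — 2 statements merged into one kernel-verified Lean document; each statement's English description precedes it below -/
import Mathlib

section
/- For t ∈ [1, 2], the operator norm on ℓᵗ(Fin 2) of the matrix a = (1/2)·[[1+i, 1−i], [1−i, 1+i]] is at least 2^{1/t − 1/2}. -/
open scoped BigOperators

/-- The `ℓᵖ` norm on `ι → ℂ` for a real exponent `p`. -/
noncomputable def pNorm {ι : Type*} [Fintype ι] (p : ℝ) (ξ : ι → ℂ) : ℝ :=
  (∑ i, ‖ξ i‖ ^ p) ^ (1 / p)

/-- The operator norm of a matrix acting on `ℓᵖ(ι)`. -/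
noncomputable def opNormLp {ι : Type*} [Fintype ι] (p : ℝ) (M : Matrix ι ι ℂ) : ℝ :=
  sInf {c : ℝ | 0 ≤ c ∧ ∀ ξ : ι → ℂ, pNorm p (M.mulVec ξ) ≤ c * pNorm p ξ}

/-- The matrix `a = (1/2)·[[1+i, 1−i], [1−i, 1+i]]`. -/
noncomputable def aMat : Matrix (Fin 2) (Fin 2) ℂ :=
  (1 / 2 : ℂ) • !![1 + Complex.I, 1 - Complex.I; 1 - Complex.I, 1 + Complex.I]

lemma norm_half_one_add_I : ‖((1 + Complex.I)/2)‖ = Real.sqrt 2 / 2 := by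
  rw [norm_div]
  simp [Complex.norm_def, Complex.normSq_apply]
  norm_num

lemma norm_half_one_sub_I : ‖((1 - Complex.I)/2)‖ = Real.sqrt 2 / 2 := by
  rw [norm_div]
  simp [Complex.norm_def, Complex.normSq_apply]
  norm_num

lemma sqrt2_div_two_eq : Real.sqrt 2 / 2 = (2:ℝ) ^ (-(1/2) : ℝ) := by
  rw [show (-(1/2):ℝ) = 1/2 - 1 by norm_num, Real.rpow_sub two_pos, Real.rpow_one,
    Real.sqrt_eq_rpow]

lemma key_eq (t : ℝ) (ht : 1 ≤ t) :
    ((2:ℝ) * ((2:ℝ) ^ (-(1/2):ℝ)) ^ t) ^ (1/t) = 2 ^ (1/t - 1/2) := by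
  have ht0 : t ≠ 0 := by linarith
  nth_rewrite 1 [show (2:ℝ) = 2^(1:ℝ) from (Real.rpow_one 2).symm]
  rw [← Real.rpow_mul (by norm_num), ← Real.rpow_add two_pos,
    ← Real.rpow_mul (by norm_num)]
  congr 1
  field_simp
  ring

/-- For `t ∈ [1, 2]`, the operator norm of `a` on `ℓᵗ(Fin 2)` is at least
`2 ^ (1/t − 1/2)`. -/
theorem stmt3 (t : ℝ) (ht : 1 ≤ t) (ht2 : t ≤ 2) :
    (2 : ℝ) ^ (1 / t - 1 / 2) ≤ opNormLp t aMat := by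
  have ht0 : (0:ℝ) < t := by linarith
  have htne : t ≠ 0 := ne_of_gt ht0
  have h1t : (0:ℝ) ≤ 1/t := by positivity
  apply le_csInf
  · -- the defining set is nonempty: c = 4 works
    refine ⟨4, by norm_num, fun ξ => ?_⟩
    set N := pNorm t ξ with hN
    have hsum_nn : (0:ℝ) ≤ ∑ i, ‖ξ i‖ ^ t :=
      Finset.sum_nonneg fun i _ => Real.rpow_nonneg (norm_nonneg _) _
    have hNnn : 0 ≤ N := Real.rpow_nonneg hsum_nn _
    have hle : ∀ j, ‖ξ j‖ ≤ N := by
      intro j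
      have hj : ‖ξ j‖ ^ t ≤ ∑ i, ‖ξ i‖ ^ t :=
        Finset.single_le_sum (f := fun i => ‖ξ i‖ ^ t)
          (fun i _ => Real.rpow_nonneg (norm_nonneg _) t) (Finset.mem_univ j)
      have := Real.rpow_le_rpow (Real.rpow_nonneg (norm_nonneg _) t) hj h1t
      rw [← Real.rpow_mul (norm_nonneg _), mul_one_div, div_self htne, Real.rpow_one] at this
      rw [hN]; unfold pNorm; exact this
    have hentry : ∀ i, ‖aMat.mulVec ξ i‖ ≤ 2 * N := by
      intro i
      have hv : aMat.mulVec ξ i = (1 + Complex.I)/2 * ξ 0 + (1 - Complex.I)/2 * ξ 1 ∨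
          aMat.mulVec ξ i = (1 - Complex.I)/2 * ξ 0 + (1 + Complex.I)/2 * ξ 1 := by
        fin_cases i
        · left
          simp [aMat, Matrix.mulVec, dotProduct, Fin.sum_univ_two]
          ring
        · right
          simp [aMat, Matrix.mulVec, dotProduct, Fin.sum_univ_two]
          ring
      have hsq : Real.sqrt 2 / 2 ≤ 1 := by
        rw [div_le_one (by norm_num)]
        calc Real.sqrt 2 ≤ Real.sqrt 4 := Real.sqrt_le_sqrt (by norm_num)
        _ = 2 := by
            rw [show (4:ℝ) = 2^2 by norm_num, Real.sqrt_sq (by norm_num)]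
      have key : ∀ a b : ℂ, ‖a‖ = Real.sqrt 2 / 2 → ‖b‖ = Real.sqrt 2 / 2 →
          ‖a * ξ 0 + b * ξ 1‖ ≤ 2 * N := by
        intro a b ha hb
        calc ‖a * ξ 0 + b * ξ 1‖ ≤ ‖a * ξ 0‖ + ‖b * ξ 1‖ := norm_add_le _ _
        _ = (Real.sqrt 2 / 2) * ‖ξ 0‖ + (Real.sqrt 2 / 2) * ‖ξ 1‖ := by
            rw [norm_mul, norm_mul, ha, hb]
        _ ≤ 1 * N + 1 * N := by
            gcongr <;> [exact hle 0; exact hle 1]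
        _ = 2 * N := by ring
      rcases hv with hv | hv <;> rw [hv]
      · exact key _ _ norm_half_one_add_I norm_half_one_sub_I
      · exact key _ _ norm_half_one_sub_I norm_half_one_add_I
    -- now bound the pNorm of the image
    have hsum2 : ∑ i, ‖aMat.mulVec ξ i‖ ^ t ≤ 2 * (2*N) ^ t := by
      rw [Fin.sum_univ_two]
      have e0 := Real.rpow_le_rpow (norm_nonneg _) (hentry 0) (le_of_lt ht0)
      have e1 := Real.rpow_le_rpow (norm_nonneg _) (hentry 1) (le_of_lt ht0)
      linarith
    calc pNorm t (aMat.mulVec ξ)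
        ≤ (2 * (2*N) ^ t) ^ (1/t) := Real.rpow_le_rpow
          (Finset.sum_nonneg fun i _ => Real.rpow_nonneg (norm_nonneg _) _) hsum2 h1t
      _ = 2 ^ (1/t) * (2*N) := by
          rw [Real.mul_rpow (by norm_num) (Real.rpow_nonneg (by positivity) _),
            ← Real.rpow_mul (by positivity), mul_one_div, div_self htne, Real.rpow_one]
      _ ≤ 2 ^ (1:ℝ) * (2*N) := by
          gcongr
          · norm_num
          · rw [div_le_one ht0]; exact ht
      _ = 4 * N := by rw [Real.rpow_one]; ring
  · -- every element of the set is at least the claimed bound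
    rintro c ⟨hc0, hc⟩
    have h := hc ![1, 0]
    have hden : pNorm t ![(1:ℂ), 0] = 1 := by
      simp only [pNorm, Fin.sum_univ_two]
      norm_num [Real.zero_rpow htne]
    have hvec : aMat.mulVec ![(1:ℂ), 0] = ![(1 + Complex.I)/2, (1 - Complex.I)/2] := by
      funext i
      fin_cases i <;>
        · simp [aMat, Matrix.mulVec, dotProduct, Fin.sum_univ_two]
          ring
    have hnum : pNorm t (aMat.mulVec ![(1:ℂ), 0]) = 2 ^ (1/t - 1/2) := by
      rw [hvec]
      simp only [pNorm, Fin.sum_univ_two]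
      rw [show (![(1 + Complex.I)/2, (1 - Complex.I)/2] : Fin 2 → ℂ) 0 = (1 + Complex.I)/2 from rfl,
        show (![(1 + Complex.I)/2, (1 - Complex.I)/2] : Fin 2 → ℂ) 1 = (1 - Complex.I)/2 from rfl,
        norm_half_one_add_I, norm_half_one_sub_I, sqrt2_div_two_eq,
        show ((2:ℝ) ^ (-(1/2):ℝ)) ^ t + ((2:ℝ) ^ (-(1/2):ℝ)) ^ t
            = 2 * ((2:ℝ) ^ (-(1/2):ℝ)) ^ t by ring, key_eq t ht]
    rw [hnum, hden, mul_one] at h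
    exact h
end

section
/- The operator norm on ℓ¹(Fin 2) of the matrix a = (1/2)·[[1+i, 1−i], [1−i, 1+i]] equals √2, and the operator norm on ℓ²(Fin 2) of a equals 1. -/
open scoped BigOperators

lemma pNorm_one' (ξ : Fin 2 → ℂ) : pNorm 1 ξ = ‖ξ 0‖ + ‖ξ 1‖ := by
  simp [pNorm, Fin.sum_univ_two]

lemma pNorm_two' (ξ : Fin 2 → ℂ) : pNorm 2 ξ = Real.sqrt (‖ξ 0‖^2 + ‖ξ 1‖^2) := by
  rw [pNorm, Fin.sum_univ_two, Real.sqrt_eq_rpow]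
  norm_num [Real.rpow_natCast]

lemma aMat_mulVec0 (ξ : Fin 2 → ℂ) :
    aMat.mulVec ξ 0 = ((1 + Complex.I) * ξ 0 + (1 - Complex.I) * ξ 1) / 2 := by
  simp [aMat, Matrix.mulVec, dotProduct, Fin.sum_univ_two]
  ring

lemma aMat_mulVec1 (ξ : Fin 2 → ℂ) :
    aMat.mulVec ξ 1 = ((1 - Complex.I) * ξ 0 + (1 + Complex.I) * ξ 1) / 2 := by
  simp [aMat, Matrix.mulVec, dotProduct, Fin.sum_univ_two]
  ring

lemma norm_one_add_I' : ‖(1 + Complex.I)‖ = Real.sqrt 2 := by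
  rw [Complex.norm_def, Complex.normSq_apply]
  norm_num

lemma norm_one_sub_I' : ‖(1 - Complex.I)‖ = Real.sqrt 2 := by
  rw [Complex.norm_def, Complex.normSq_apply]
  norm_num

lemma key_sq (x y : ℂ) :
    ‖(1+Complex.I)*x+(1-Complex.I)*y‖^2 + ‖(1-Complex.I)*x+(1+Complex.I)*y‖^2
      = 4*(‖x‖^2 + ‖y‖^2) := by
  simp only [Complex.sq_norm, Complex.normSq_apply,
    Complex.add_re, Complex.add_im, Complex.mul_re, Complex.mul_im,
    Complex.one_re, Complex.one_im, Complex.I_re, Complex.I_im,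
    Complex.sub_re, Complex.sub_im]
  ring

lemma pNorm_two_mulVec (ξ : Fin 2 → ℂ) : pNorm 2 (aMat.mulVec ξ) = pNorm 2 ξ := by
  rw [pNorm_two', pNorm_two', aMat_mulVec0, aMat_mulVec1]
  congr 1
  have h2 : ‖(2:ℂ)‖ = 2 := by norm_num
  rw [norm_div, norm_div, h2, div_pow, div_pow]
  have := key_sq (ξ 0) (ξ 1)
  nlinarith [this]

/-- The operator norm of `a` on `ℓ¹(Fin 2)` is `√2`, and its operator norm on
`ℓ²(Fin 2)` is `1`. -/
theorem stmt4 : opNormLp 1 aMat = Real.sqrt 2 ∧ opNormLp 2 aMat = 1 := by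
  have s2nn : (0:ℝ) ≤ Real.sqrt 2 := Real.sqrt_nonneg 2
  have s2sq : Real.sqrt 2 ^ 2 = 2 := Real.sq_sqrt (by norm_num)
  constructor
  · apply IsLeast.csInf_eq
    constructor
    · refine ⟨s2nn, fun ξ => ?_⟩
      rw [pNorm_one' (aMat.mulVec ξ), pNorm_one', aMat_mulVec0, aMat_mulVec1]
      have h2 : ‖(2:ℂ)‖ = 2 := by norm_num
      have b0 : ‖((1 + Complex.I) * ξ 0 + (1 - Complex.I) * ξ 1) / 2‖
          ≤ (Real.sqrt 2 * ‖ξ 0‖ + Real.sqrt 2 * ‖ξ 1‖) / 2 := by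
        rw [norm_div, h2]
        gcongr
        calc ‖(1 + Complex.I) * ξ 0 + (1 - Complex.I) * ξ 1‖
            ≤ ‖(1 + Complex.I) * ξ 0‖ + ‖(1 - Complex.I) * ξ 1‖ := norm_add_le _ _
          _ = Real.sqrt 2 * ‖ξ 0‖ + Real.sqrt 2 * ‖ξ 1‖ := by
              rw [norm_mul, norm_mul, norm_one_add_I', norm_one_sub_I']
      have b1 : ‖((1 - Complex.I) * ξ 0 + (1 + Complex.I) * ξ 1) / 2‖
          ≤ (Real.sqrt 2 * ‖ξ 0‖ + Real.sqrt 2 * ‖ξ 1‖) / 2 := by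
        rw [norm_div, h2]
        gcongr
        calc ‖(1 - Complex.I) * ξ 0 + (1 + Complex.I) * ξ 1‖
            ≤ ‖(1 - Complex.I) * ξ 0‖ + ‖(1 + Complex.I) * ξ 1‖ := norm_add_le _ _
          _ = Real.sqrt 2 * ‖ξ 0‖ + Real.sqrt 2 * ‖ξ 1‖ := by
              rw [norm_mul, norm_mul, norm_one_sub_I', norm_one_add_I']
      linarith
    · rintro c ⟨hc0, hc⟩
      have h := hc ![1, 0]
      rw [pNorm_one' (aMat.mulVec ![1,0]), pNorm_one', aMat_mulVec0, aMat_mulVec1] at h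
      simp only [Matrix.cons_val_zero, Matrix.cons_val_one, Matrix.head_cons, mul_one,
        mul_zero, add_zero, norm_one, norm_zero] at h
      have h2 : ‖(2:ℂ)‖ = 2 := by norm_num
      rw [norm_div, norm_div, h2, norm_one_add_I', norm_one_sub_I'] at h
      linarith
  · apply IsLeast.csInf_eq
    constructor
    · exact ⟨zero_le_one, fun ξ => by rw [pNorm_two_mulVec, one_mul]⟩
    · rintro c ⟨hc0, hc⟩
      have h := hc ![1, 0]
      rw [pNorm_two_mulVec, pNorm_two'] at h
      simp only [Matrix.cons_val_zero, Matrix.cons_val_one, Matrix.head_cons,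
        norm_one, norm_zero] at h
      rw [show (1:ℝ)^2 + 0^2 = 1 by norm_num, Real.sqrt_one] at h
      linarith
end
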